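/- For every n ∈ ℙ, ∑_{σ ∈ S_n} (-1)^{inv(σ)} q^{maj(σ)} = [1]_q [2]_{-q} [3]_q [4]_{-q} ⋯ [n]_{(-1)^{n-1} q} (the Gessel–Simion formula for the signed Mahonian polynomial of the symmetric group). -/

import Mathlib

open Finset Polynomial

/-- The hyperoctahedral group `B n`, modeled as pairs (permutation, sign vector):
the signed permutation with window `β(i) = ±(σ(i)+1)`. -/
abbrev Bgrp (n : ℕ) := Equiv.Perm (Fin n) × (Fin n → Bool)

/-- The window entry `β(i)` (a nonzero integer). -/
def wdw {n : ℕ} (β : Bgrp n) (i : Fin n) : ℤ :=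
  (if β.2 i then -1 else 1) * ((β.1 i : ℤ) + 1)

/-- Window entry at a `ℕ` position (0-based), `0` out of range. -/
def wdwN {n : ℕ} (β : Bgrp n) (i : ℕ) : ℤ :=
  if h : i < n then wdw β ⟨i, h⟩ else 0

/-- Number of inversions of the window. -/
def invB {n : ℕ} (β : Bgrp n) : ℕ :=
  ((univ : Finset (Fin n × Fin n)).filter
    (fun p => p.1 < p.2 ∧ wdw β p.2 < wdw β p.1)).card

/-- The set of positions with negative entries. -/
def NegB {n : ℕ} (β : Bgrp n) : Finset (Fin n) :=
  univ.filter (fun i => wdw β i < 0)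

def N1 {n : ℕ} (β : Bgrp n) : ℕ := (NegB β).card

def N2 {n : ℕ} (β : Bgrp n) : ℕ :=
  ((univ : Finset (Fin n × Fin n)).filter
    (fun p => p.1 < p.2 ∧ wdw β p.1 + wdw β p.2 < 0)).card

/-- The order `-1 ≺ -2 ≺ ⋯ ≺ -n ≺ 1 ≺ 2 ≺ ⋯ ≺ n` on nonzero integers. -/
def precLt (a b : ℤ) : Prop :=
  (a < 0 ∧ b < 0 ∧ b < a) ∨ (a < 0 ∧ 0 < b) ∨ (0 < a ∧ 0 < b ∧ a < b)

instance (a b : ℤ) : Decidable (precLt a b) := by unfold precLt; infer_instance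

/-- Descent set of the window, with respect to `≺` (0-based positions). -/
def DesB {n : ℕ} (β : Bgrp n) : Finset ℕ :=
  (range (n-1)).filter (fun i => precLt (wdwN β (i+1)) (wdwN β i))

/-- Major index: sum of the (1-based) descent positions. -/
def majB {n : ℕ} (β : Bgrp n) : ℕ := ∑ i ∈ DesB β, (i+1)

/-- Flag-major index. -/
def fmaj {n : ℕ} (β : Bgrp n) : ℕ := 2 * majB β + N1 β

/-- Group multiplication (composition of signed permutations). -/
def bmul {n : ℕ} (β γ : Bgrp n) : Bgrp n :=
  (β.1 * γ.1, fun i => xor (γ.2 i) (β.2 (γ.1 i)))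

/-- The identity signed permutation. -/
def bone (n : ℕ) : Bgrp n := (1, fun _ => false)

/-- The Coxeter generators `s_0, s_1, …, s_{n-1}` of `B n`. -/
def BGens (n : ℕ) : Set (Bgrp n) :=
  { b | (∃ h : 0 < n, b = ((1 : Equiv.Perm (Fin n)), fun j => decide (j = (⟨0, h⟩ : Fin n)))) ∨
        (∃ (i : ℕ) (h : i + 1 < n),
          b = (Equiv.swap ⟨i, Nat.lt_of_succ_lt h⟩ ⟨i+1, h⟩, fun _ => false)) }

/-- Minimal length of an expression of `β` as a product of the generators of `B n`. -/
noncomputable def lenB {n : ℕ} (β : Bgrp n) : ℕ :=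
  sInf {k | ∃ l : List (Bgrp n), l.length = k ∧ (∀ g ∈ l, g ∈ BGens n) ∧
    l.foldr bmul (bone n) = β}

/-- The Coxeter generators `s_0^D, s_1, …, s_{n-1}` of `D n`. -/
def DGens (n : ℕ) : Set (Bgrp n) :=
  { b | (∃ h : 1 < n,
          b = (Equiv.swap ⟨0, Nat.lt_of_succ_lt h⟩ ⟨1, h⟩, fun (j : Fin n) => decide ((j : ℕ) < 2))) ∨
        (∃ (i : ℕ) (h : i + 1 < n),
          b = (Equiv.swap ⟨i, Nat.lt_of_succ_lt h⟩ ⟨i+1, h⟩, fun _ => false)) }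

/-- Minimal length of an expression as a product of the generators of `D n`. -/
noncomputable def lenD {n : ℕ} (β : Bgrp n) : ℕ :=
  sInf {k | ∃ l : List (Bgrp n), l.length = k ∧ (∀ g ∈ l, g ∈ DGens n) ∧
    l.foldr bmul (bone n) = β}

/-- The even-signed permutation group `D n` as a finset of `B n`. -/
def Dgrp (n : ℕ) : Finset (Bgrp n) := univ.filter (fun γ => Even (N1 γ))

/-- `Δ_n = {γ ∈ B_n : γ(n) > 0}`. -/
def DeltaSet (n : ℕ) : Finset (Bgrp n) := univ.filter (fun γ => 0 < wdwN γ (n-1))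

/-- `|γ|_n`: replace the last window entry by its absolute value. -/
def absLast {n : ℕ} (γ : Bgrp n) : Bgrp n :=
  (γ.1, fun i => if (i : ℕ) = n - 1 then false else γ.2 i)

/-- The `D`-major index. -/
def Dmaj {n : ℕ} (γ : Bgrp n) : ℕ := fmaj (absLast γ)

/-- `-β`: negate all window entries. -/
def negB {n : ℕ} (β : Bgrp n) : Bgrp n := (β.1, fun i => !β.2 i)

/-- Number of inversions of a permutation of `Fin n`. -/
def invS {n : ℕ} (σ : Equiv.Perm (Fin n)) : ℕ :=
  ((univ : Finset (Fin n × Fin n)).filter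
    (fun p => p.1 < p.2 ∧ σ p.2 < σ p.1)).card

/-- Major index of a permutation of `Fin n` (usual order). -/
def majS {n : ℕ} (σ : Equiv.Perm (Fin n)) : ℕ :=
  ∑ i ∈ (range (n-1)).filter
      (fun i => ∀ h : i + 1 < n, σ ⟨i+1, h⟩ < σ ⟨i, Nat.lt_of_succ_lt h⟩), (i+1)

/-- The `q`-analogue `[m]_q = 1 + q + ⋯ + q^{m-1}`, evaluated at a polynomial `q`. -/
noncomputable def qpoly (m : ℕ) (q : Polynomial ℤ) : Polynomial ℤ := ∑ k ∈ range m, q ^ k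

def insLast {m : ℕ} (k : Fin (m+1)) (τ : Equiv.Perm (Fin m)) : Equiv.Perm (Fin (m+1)) :=
  (finSuccEquiv' (Fin.last m)).trans ((Equiv.optionCongr τ).trans (finSuccEquiv' k).symm)

lemma insLast_last {m : ℕ} (k : Fin (m+1)) (τ : Equiv.Perm (Fin m)) :
    insLast k τ (Fin.last m) = k := by
  simp [insLast]

lemma insLast_castSucc {m : ℕ} (k : Fin (m+1)) (τ : Equiv.Perm (Fin m)) (j : Fin m) :
    insLast k τ (Fin.castSucc j) = k.succAbove (τ j) := by
  simp [insLast, ← Fin.succAbove_last, finSuccEquiv'_succAbove]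

lemma insLast_bijective {m : ℕ} :
    Function.Bijective (fun p : Fin (m+1) × Equiv.Perm (Fin m) => insLast p.1 p.2) := by
  rw [Fintype.bijective_iff_injective_and_card]
  refine ⟨?_, ?_⟩
  · rintro ⟨k, τ⟩ ⟨k', τ'⟩ h
    simp only at h
    have hk : k = k' := by rw [← insLast_last k τ, h, insLast_last]
    subst hk
    have hτ : τ = τ' := by
      ext j
      have h2 := congrArg (fun e : Equiv.Perm (Fin (m+1)) => e (Fin.castSucc j)) h
      simp only [insLast_castSucc] at h2
      exact Fin.val_eq_val .. |>.mpr (Fin.succAbove_right_injective h2)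
    rw [hτ]
  · simp [Fintype.card_perm, Nat.factorial_succ]

lemma card_ge {m : ℕ} (k : Fin (m+1)) (τ : Equiv.Perm (Fin m)) :
    ((univ : Finset (Fin m)).filter (fun i => (k:ℕ) ≤ (τ i : ℕ))).card = m - (k:ℕ) := by
  have h1 : ((univ : Finset (Fin m)).filter (fun i => (k:ℕ) ≤ (τ i : ℕ))).card
      = ((univ : Finset (Fin m)).filter (fun v : Fin m => (k:ℕ) ≤ (v : ℕ))).card := by
    apply Finset.card_nbij (i := fun i => τ i)
    · intro i hi; simp_all
    · intro a ha b hb hab; exact τ.injective hab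
    · intro v hv; simp only [coe_filter, Set.mem_setOf_eq, mem_univ, true_and] at hv ⊢
      exact ⟨τ.symm v, by simpa using hv⟩
  rw [h1, Finset.card_filter]
  rw [Fin.sum_univ_eq_sum_range (fun i => if (k:ℕ) ≤ i then 1 else 0) m]
  rw [← Finset.card_filter]
  rw [Finset.range_eq_Ico, Finset.Ico_filter_le_of_left_le (Nat.zero_le _)]
  simp

lemma invS_insLast {m : ℕ} (k : Fin (m+1)) (τ : Equiv.Perm (Fin m)) :
    invS (insLast k τ) = invS τ + (m - (k:ℕ)) := by
  set σ := insLast k τ with hσ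
  rw [invS]
  set S := ((univ : Finset (Fin (m+1) × Fin (m+1))).filter
    (fun p => p.1 < p.2 ∧ σ p.2 < σ p.1)) with hS
  rw [← Finset.card_filter_add_card_filter_not (s := S)
    (p := fun p => p.2 = Fin.last m), add_comm]
  congr 1
  · -- non-last part = invS τ
    rw [invS]
    symm
    apply Finset.card_nbij (i := fun p => (Fin.castSucc p.1, Fin.castSucc p.2))
    · intro p hp
      simp only [Finset.mem_coe, mem_filter, mem_univ, true_and, hS] at hp ⊢
      obtain ⟨h1, h2⟩ := hp
      refine ⟨⟨by simpa using h1, ?_⟩, by simp [Fin.castSucc_lt_last, (Fin.castSucc_lt_last _).ne]⟩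
      rw [hσ, insLast_castSucc, insLast_castSucc]
      exact (Fin.succAbove_lt_succAbove_iff).mpr h2
    · intro a _ b _ hab
      simp only [Prod.mk.injEq] at hab
      exact Prod.ext (Fin.castSucc_injective _ hab.1) (Fin.castSucc_injective _ hab.2)
    · intro p hp
      simp only [hS, filter_filter, coe_filter, Set.mem_setOf_eq, mem_univ, true_and,
        Set.mem_image] at hp ⊢
      obtain ⟨⟨h1, h2⟩, h3⟩ := hp
      obtain ⟨b, hb⟩ := Fin.eq_castSucc_of_ne_last h3
      have h1' : p.1 < Fin.last m := lt_of_lt_of_le h1 (by rw [← hb]; exact (Fin.castSucc_lt_last b).le)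
      obtain ⟨a, ha⟩ := Fin.eq_castSucc_of_ne_last h1'.ne
      refine ⟨(a, b), ⟨?_, ?_⟩, by rw [ha, hb]⟩
      · rw [← ha, ← hb] at h1; simpa using h1
      · rw [← ha, ← hb, hσ, insLast_castSucc, insLast_castSucc] at h2
        exact (Fin.succAbove_lt_succAbove_iff).mp h2
  · -- last part
    rw [← card_ge k τ]
    symm
    apply Finset.card_nbij (i := fun i => (Fin.castSucc i, Fin.last m))
    · intro i hi
      simp only [Finset.mem_coe, mem_filter, mem_univ, true_and, hS] at hi ⊢
      refine ⟨⟨Fin.castSucc_lt_last i, ?_⟩, trivial⟩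
      rw [hσ, insLast_castSucc, insLast_last]
      rw [Fin.lt_succAbove_iff_le_castSucc]
      exact Fin.le_def.mpr (by simpa using hi)
    · intro a _ b _ hab
      simp only [Prod.mk.injEq] at hab
      exact Fin.castSucc_injective _ hab.1
    · intro p hp
      simp only [hS, filter_filter, coe_filter, Set.mem_setOf_eq, mem_univ, true_and,
        Set.mem_image] at hp ⊢
      obtain ⟨⟨h1, h2⟩, h3⟩ := hp
      have h1' : p.1 ≠ Fin.last m := by rw [h3] at h1; exact h1.ne
      obtain ⟨a, ha⟩ := Fin.eq_castSucc_of_ne_last h1'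
      refine ⟨a, ?_, by rw [ha, ← h3]⟩
      rw [← ha, h3, hσ, insLast_castSucc, insLast_last] at h2
      rw [Fin.lt_succAbove_iff_le_castSucc] at h2
      simpa [Fin.le_def] using h2

lemma majS_insLast {m : ℕ} (k : Fin (m+2)) (τ : Equiv.Perm (Fin (m+1))) :
    majS (insLast k τ) = majS τ + (m+1) * (if (k:ℕ) ≤ (τ (Fin.last m) : ℕ) then 1 else 0) := by
  set σ := insLast k τ with hσ
  have key : ∀ (i : ℕ) (h : i < m + 2) (h' : i < m + 1),
      σ ⟨i, h⟩ = k.succAbove (τ ⟨i, h'⟩) := by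
    intro i h h'
    rw [hσ, show (⟨i, h⟩ : Fin (m+2)) = Fin.castSucc ⟨i, h'⟩ from rfl, insLast_castSucc]
  have keyLast : ∀ (h : m + 1 < m + 2), σ ⟨m+1, h⟩ = k := by
    intro h
    rw [hσ, show (⟨m+1, h⟩ : Fin (m+2)) = Fin.last (m+1) from rfl, insLast_last]
  simp only [majS, Nat.add_sub_cancel]
  rw [Finset.sum_filter, Finset.sum_filter, Finset.sum_range_succ]
  congr 1
  · apply Finset.sum_congr rfl
    intro i hi
    rw [Finset.mem_range] at hi
    have h1 : i + 1 < m + 1 := by omega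
    have h2 : i < m + 1 := by omega
    congr 1
    apply propext
    constructor
    · intro H h'
      have H2 := H (by omega)
      rw [key _ _ h', key _ _ (Nat.lt_of_succ_lt h')] at H2
      exact (Fin.succAbove_lt_succAbove_iff).mp H2
    · intro H h'
      rw [key _ _ h1, key _ _ h2]
      exact (Fin.succAbove_lt_succAbove_iff).mpr (H h1)
  · by_cases hc : (k:ℕ) ≤ (τ (Fin.last m) : ℕ)
    · rw [if_pos hc, if_pos, mul_one]
      intro h
      rw [keyLast h, key m _ (Nat.lt_succ_self m),
        show (⟨m, Nat.lt_succ_self m⟩ : Fin (m+1)) = Fin.last m from rfl,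
        Fin.lt_succAbove_iff_le_castSucc]
      exact Fin.le_def.mpr (by simpa using hc)
    · rw [if_neg hc, if_neg, mul_zero]
      intro H
      apply hc
      have H2 := H (by omega)
      rw [keyLast _, key m _ (Nat.lt_succ_self m),
        show (⟨m, Nat.lt_succ_self m⟩ : Fin (m+1)) = Fin.last m from rfl,
        Fin.lt_succAbove_iff_le_castSucc] at H2
      simpa [Fin.le_def] using H2

lemma geom_split {R : Type*} [CommRing R] (u : R) (n j : ℕ) (hj : j ≤ n+1) :
    ∑ v ∈ range (n+1), (if j ≤ v then u^(n+1) else 1) * u^(n-v)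
      = (∑ i ∈ range (n+1), u^i) * u^(n+1-j) := by
  have hsplit : n + 1 = j + (n + 1 - j) := by omega
  have e1 : range (n+1) = range (j + (n+1-j)) := by rw [← hsplit]
  rw [Finset.sum_mul, e1, Finset.sum_range_add, Finset.sum_range_add]
  congr 1
  · rw [← Finset.sum_range_reflect (fun i => u^i * u^(n+1-j)) j]
    apply Finset.sum_congr rfl
    intro v hv
    rw [Finset.mem_range] at hv
    rw [if_neg (by omega), one_mul, ← pow_add]
    congr 1
    omega
  · rw [← Finset.sum_range_reflect
      (fun i => (if j ≤ j + i then u^(n+1) else 1) * u^(n-(j+i))) (n+1-j)]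
    apply Finset.sum_congr rfl
    intro v hv
    rw [Finset.mem_range] at hv
    rw [if_pos (by omega), ← pow_add, ← pow_add]
    congr 1
    omega

lemma FIB (n : ℕ) (j : Fin (n+1)) :
    ∑ τ ∈ (univ : Finset (Equiv.Perm (Fin (n+1)))).filter (fun τ => τ (Fin.last n) = j),
      ((-1 : Polynomial ℤ) ^ invS τ * X ^ majS τ)
    = (∏ i ∈ range n, qpoly (i+1) ((-1 : Polynomial ℤ)^i * X))
        * ((-1 : Polynomial ℤ)^n * X)^(n - (j:ℕ)) := by
  induction n with
  | zero =>
    have h1 : ∀ τ : Equiv.Perm (Fin 1), τ (Fin.last 0) = j := fun τ => Subsingleton.elim _ _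
    rw [Finset.filter_true_of_mem (fun τ _ => h1 τ)]
    have huniv : (univ : Finset (Equiv.Perm (Fin 1))) = {1} := by
      ext τ; simp [Subsingleton.elim τ 1]
    rw [huniv, Finset.sum_singleton]
    have hinv : invS (1 : Equiv.Perm (Fin 1)) = 0 := by
      rw [invS, Finset.card_eq_zero, Finset.filter_eq_empty_iff]
      intro p _
      simp [Subsingleton.elim p.1 p.2, lt_irrefl]
    have hmaj : majS (1 : Equiv.Perm (Fin 1)) = 0 := rfl
    simp [hinv, hmaj]
  | succ n IH =>
    rw [Finset.sum_filter]
    rw [← Fintype.sum_bijective _ insLast_bijective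
      (fun p : Fin (n+2) × Equiv.Perm (Fin (n+1)) =>
        if insLast p.1 p.2 (Fin.last (n+1)) = j then
          (-1 : Polynomial ℤ) ^ invS (insLast p.1 p.2) * X ^ majS (insLast p.1 p.2) else 0)
      _ (fun p => rfl)]
    simp only [insLast_last]
    rw [Fintype.sum_prod_type]
    rw [Finset.sum_eq_single_of_mem j (Finset.mem_univ j)
      (fun k _ hk => by simp [hk])]
    simp only [if_pos]
    have step1 : ∀ τ : Equiv.Perm (Fin (n+1)),
        ((-1 : Polynomial ℤ) ^ invS (insLast j τ) * X ^ majS (insLast j τ)) =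
        (-1 : Polynomial ℤ) ^ (invS τ + ((n+1) - (j:ℕ)))
          * X ^ (majS τ + (n+1) * (if (j:ℕ) ≤ (τ (Fin.last n) : ℕ) then 1 else 0)) := by
      intro τ
      rw [invS_insLast, majS_insLast]
    rw [Finset.sum_congr rfl (fun τ _ => step1 τ)]
    rw [← Finset.sum_fiberwise (univ : Finset (Equiv.Perm (Fin (n+1))))
      (fun τ => τ (Fin.last n))
      (fun τ => (-1 : Polynomial ℤ) ^ (invS τ + ((n+1) - (j:ℕ)))
          * X ^ (majS τ + (n+1) * (if (j:ℕ) ≤ (τ (Fin.last n) : ℕ) then 1 else 0)))]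
    set P : Polynomial ℤ := ∏ i ∈ range n, qpoly (i+1) ((-1 : Polynomial ℤ)^i * X) with hP
    set u : Polynomial ℤ := (-1 : Polynomial ℤ)^n * X with hu
    have inner : ∀ v : Fin (n+1),
        (∑ τ ∈ (univ : Finset (Equiv.Perm (Fin (n+1)))).filter (fun τ => τ (Fin.last n) = v),
          (-1 : Polynomial ℤ) ^ (invS τ + ((n+1) - (j:ℕ)))
            * X ^ (majS τ + (n+1) * (if (j:ℕ) ≤ (τ (Fin.last n) : ℕ) then 1 else 0)))
        = ((-1 : Polynomial ℤ) ^ ((n+1) - (j:ℕ))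
            * X ^ ((n+1) * (if (j:ℕ) ≤ (v : ℕ) then 1 else 0))) * (P * u ^ (n - (v:ℕ))) := by
      intro v
      rw [← IH v, Finset.mul_sum]
      apply Finset.sum_congr rfl
      intro τ hτ
      rw [Finset.mem_filter] at hτ
      rw [hτ.2, pow_add, pow_add]
      ring
    rw [Finset.sum_congr rfl (fun v _ => inner v)]
    rw [Fin.sum_univ_eq_sum_range (fun v =>
      ((-1 : Polynomial ℤ) ^ ((n+1) - (j:ℕ)) * X ^ ((n+1) * (if (j:ℕ) ≤ v then 1 else 0)))
        * (P * u ^ (n - v))) (n+1)]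
    rw [prod_range_succ, ← hP]
    have hqp : qpoly (n+1) ((-1 : Polynomial ℤ)^n * X) = ∑ i ∈ range (n+1), u^i := by
      rw [qpoly, hu]
    have hX : (X : Polynomial ℤ)^(n+1) = u^(n+1) := by
      rw [hu, mul_pow, ← pow_mul, Even.neg_one_pow (Nat.even_mul_succ_self n), one_mul]
    have hnegu : ((-1 : Polynomial ℤ)^(n+1) * X) = -u := by rw [hu, pow_succ]; ring
    rw [hqp, hnegu]
    have hterm : ∀ v ∈ range (n+1),
        ((-1 : Polynomial ℤ) ^ ((n+1) - (j:ℕ)) * X ^ ((n+1) * (if (j:ℕ) ≤ v then 1 else 0)))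
          * (P * u ^ (n - v))
        = ((-1 : Polynomial ℤ) ^ ((n+1) - (j:ℕ)) * P)
            * ((if (j:ℕ) ≤ v then u^(n+1) else 1) * u^(n-v)) := by
      intro v _
      by_cases hc : (j:ℕ) ≤ v
      · rw [if_pos hc, if_pos hc, mul_one, hX]; ring
      · rw [if_neg hc, if_neg hc, mul_zero, pow_zero]; ring
    rw [Finset.sum_congr rfl hterm, ← Finset.mul_sum, geom_split u n (j:ℕ) (Fin.is_le j)]
    rw [neg_pow u ((n+1) - (j:ℕ))]
    ring

/-- Gessel–Simion: `∑_{σ ∈ S_n} (-1)^{inv σ} q^{maj σ} = [1]_q [2]_{-q} ⋯ [n]_{(-1)^{n-1} q}`. -/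
theorem stmt5 (n : ℕ) (hn : 0 < n) :
    ∑ σ : Equiv.Perm (Fin n), (-1 : Polynomial ℤ) ^ invS σ * X ^ majS σ =
      ∏ i ∈ range n, qpoly (i+1) ((-1 : Polynomial ℤ) ^ i * X) := by
  obtain ⟨m, rfl⟩ : ∃ m, n = m + 1 := ⟨n - 1, by omega⟩
  rw [← Finset.sum_fiberwise (univ : Finset (Equiv.Perm (Fin (m+1))))
    (fun σ => σ (Fin.last m))
    (fun σ => (-1 : Polynomial ℤ) ^ invS σ * X ^ majS σ)]
  rw [Finset.sum_congr rfl (fun v _ => FIB m v)]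
  rw [prod_range_succ]
  rw [Fin.sum_univ_eq_sum_range (fun v =>
    (∏ i ∈ range m, qpoly (i+1) ((-1 : Polynomial ℤ)^i * X))
      * ((-1 : Polynomial ℤ)^m * X) ^ (m - v)) (m+1)]
  rw [← Finset.mul_sum]
  congr 1
  rw [qpoly]
  rw [← Finset.sum_range_reflect (fun i => ((-1 : Polynomial ℤ)^m * X)^i) (m+1)]
  simp only [Nat.add_sub_cancel]
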